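/- Let δ > 0 and let {f_j : j ∈ J} be a Parseval frame for an N-dimensional Hilbert space H_N with ‖f_j‖² ≤ 1 − δ for all j ∈ J. Let R be a natural number with R ≥ 1/δ. Then J can be partitioned into R sets A₁, …, A_R such that for each r, the family {f_j : j ∉ A_r} spans H_N. -/

import Mathlib

set_option linter.unusedSectionVars false

open Finset Submodule Module

section RH
variable {ι : Type*} [Fintype ι] [DecidableEq ι] {K : Type*} [AddCommGroup K]
  [Module ℂ K] [FiniteDimensional ℂ K]

/-- `g` restricted to a finset is linearly independent. -/
def GIndep (g : ι → K) (I : Finset ι) : Prop :=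
  LinearIndependent ℂ (fun j : ↥(↑I : Set ι) => g ↑j)

lemma gIndep_iff (g : ι → K) (I : Finset ι) :
    GIndep g I ↔ I.card = finrank ℂ (span ℂ (g '' ↑I)) := by
  rw [GIndep, linearIndependent_iff_card_eq_finrank_span, ← Set.image_eq_range, Set.finrank]
  have hc : Fintype.card ↥(↑I : Set ι) = I.card := by simp
  rw [hc]

lemma sum_set_coe_finset {M : Type*} [AddCommMonoid M] (I : Finset ι) (f : ι → M) :
    ∑ i : ↥(↑I : Set ι), f ↑i = ∑ i ∈ I, f i := by
  rw [Finset.sum_set_coe]; simp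

lemma mem_span_image_finset_iff (g : ι → K) (I : Finset ι) (x : K) :
    x ∈ span ℂ (g '' ↑I) ↔ ∃ c : ι → ℂ, x = ∑ w ∈ I, c w • g w := by
  rw [Set.image_eq_range, mem_span_range_iff_exists_fun]
  constructor
  · rintro ⟨c, hc⟩
    refine ⟨fun w => if h : w ∈ I then c ⟨w, h⟩ else 0, ?_⟩
    rw [← hc, ← sum_set_coe_finset I (fun w => (if h : w ∈ I then c ⟨w, h⟩ else 0) • g w)]
    refine Finset.sum_congr rfl fun i _ => ?_
    rw [dif_pos (Finset.mem_coe.mp i.2)]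
  · rintro ⟨c, rfl⟩
    exact ⟨fun j => c ↑j, by rw [sum_set_coe_finset I (fun w => c w • g w)]⟩

lemma gIndep_mono {g : ι → K} {I I' : Finset ι} (h : GIndep g I) (hsub : I' ⊆ I) :
    GIndep g I' :=
  h.comp (fun j : ↥(↑I' : Set ι) => (⟨(j : ι), hsub j.2⟩ : ↥(↑I : Set ι)))
    (fun a b hab => Subtype.ext (by simpa using congrArg Subtype.val hab))

/-- exchange keeps the span. -/
lemma span_exchange {g : ι → K} {I : Finset ι} {y z : ι} {c : ι → ℂ}
    (hz : z ∈ I) (hcz : c z ≠ 0) (hrep : g y = ∑ w ∈ I, c w • g w) :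
    span ℂ (g '' ↑(insert y (I.erase z))) = span ℂ (g '' ↑I) := by
  apply le_antisymm
  · rw [span_le]
    rintro - ⟨w, hw, rfl⟩
    simp only [coe_insert, Set.mem_insert_iff, Finset.mem_coe, mem_erase] at hw
    rcases hw with rfl | ⟨-, hw⟩
    · rw [hrep]
      exact sum_mem fun w hw => smul_mem _ _ (subset_span ⟨w, hw, rfl⟩)
    · exact subset_span ⟨w, hw, rfl⟩
  · rw [span_le]
    rintro - ⟨w, hw, rfl⟩
    simp only [Finset.mem_coe] at hw
    by_cases hwz : w = z
    · subst hwz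
      have hsplit : c w • g w = g y - ∑ x ∈ I.erase w, c x • g x := by
        rw [hrep, ← Finset.add_sum_erase I (fun x => c x • g x) hw]; abel
      have : g w = (c w)⁻¹ • (g y - ∑ x ∈ I.erase w, c x • g x) := by
        rw [← hsplit, smul_smul, inv_mul_cancel₀ hcz, one_smul]
      rw [this]
      refine smul_mem _ _ (sub_mem (subset_span ⟨y, by simp, rfl⟩) (sum_mem fun x hx => smul_mem _ _ (subset_span ⟨x, by simp [Finset.mem_erase.mp hx], rfl⟩)))
    · exact subset_span ⟨w, by simp [hwz, hw], rfl⟩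

lemma gIndep_exchange {g : ι → K} {I : Finset ι} {y z : ι} {c : ι → ℂ}
    (hI : GIndep g I) (hy : y ∉ I) (hz : z ∈ I) (hcz : c z ≠ 0)
    (hrep : g y = ∑ w ∈ I, c w • g w) :
    GIndep g (insert y (I.erase z)) := by
  rw [gIndep_iff, span_exchange hz hcz hrep, Finset.card_insert_of_notMem (fun h => hy (Finset.mem_of_mem_erase h)), Finset.card_erase_of_mem hz]
  rw [gIndep_iff] at hI
  rw [← hI]
  have : 1 ≤ I.card := Finset.card_pos.mpr ⟨z, hz⟩
  omega

lemma gIndep_insert {g : ι → K} {I : Finset ι} {y : ι}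
    (hI : GIndep g I) (hy : y ∉ I) (hspan : g y ∉ span ℂ (g '' ↑I)) :
    GIndep g (insert y I) := by
  rw [gIndep_iff, Finset.card_insert_of_notMem hy]
  rw [gIndep_iff] at hI
  have himg : (g '' ↑(insert y I)) = insert (g y) (g '' ↑I) := by
    rw [Finset.coe_insert, Set.image_insert_eq]
  rw [himg, span_insert]
  have hy0 : g y ≠ 0 := fun h => hspan (h ▸ zero_mem _)
  have hinf : (ℂ ∙ g y) ⊓ span ℂ (g '' ↑I) = ⊥ := by
    rw [eq_bot_iff]
    rintro x ⟨hx1, hx2⟩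
    obtain ⟨a, rfl⟩ := mem_span_singleton.mp hx1
    rcases eq_or_ne a 0 with rfl | ha
    · simp
    · exact absurd (by simpa using smul_mem _ a⁻¹ hx2 : _) (by simp [smul_smul, inv_mul_cancel₀ ha, hspan])
  have := finrank_sup_add_finrank_inf_eq (ℂ ∙ g y) (span ℂ (g '' ↑I))
  rw [hinf, finrank_bot, finrank_span_singleton hy0] at this
  omega

end RH

section RH2
variable {ι : Type*} [Fintype ι] [DecidableEq ι] {K : Type*} [AddCommGroup K]
  [Module ℂ K] [FiniteDimensional ℂ K]

def GoodFam (g : ι → K) (R : ℕ) (F : Fin R → Finset ι) : Prop :=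
  (∀ r s, r ≠ s → Disjoint (F r) (F s)) ∧ ∀ r, GIndep g (F r)

def PhiFam (R : ℕ) (F : Fin R → Finset ι) : ℕ := ∑ r, (F r).card

def StepRel (g : ι → K) (R : ℕ) (F F' : Fin R → Finset ι) : Prop :=
  ∃ (y : ι) (r : Fin R) (z : ι) (c : ι → ℂ), (∀ s, y ∉ F s) ∧ z ∈ F r ∧ c z ≠ 0 ∧
    (g y = ∑ w ∈ F r, c w • g w) ∧ F' = Function.update F r (insert y ((F r).erase z))

lemma phi_update {R : ℕ} (F : Fin R → Finset ι) (r : Fin R) (I : Finset ι) :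
    PhiFam R (Function.update F r I) + (F r).card = PhiFam R F + I.card := by
  simp only [PhiFam]
  rw [← Finset.add_sum_erase Finset.univ (fun s => (Function.update F r I s).card)
      (Finset.mem_univ r),
    ← Finset.add_sum_erase Finset.univ (fun s => (F s).card) (Finset.mem_univ r),
    Function.update_self]
  have h : ∑ s ∈ Finset.univ.erase r, (Function.update F r I s).card
      = ∑ s ∈ Finset.univ.erase r, (F s).card :=
    Finset.sum_congr rfl fun s hs => by rw [Function.update_of_ne (Finset.mem_erase.mp hs).1]
  rw [h]; ring

lemma stepRel_good {g : ι → K} {R : ℕ} {F F' : Fin R → Finset ι}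
    (hstep : StepRel g R F F') (hF : GoodFam g R F) :
    GoodFam g R F' ∧ PhiFam R F' = PhiFam R F := by
  obtain ⟨y, r, z, c, hy, hz, hcz, hrep, rfl⟩ := hstep
  have hyr : y ∉ F r := hy r
  have hcard : (insert y ((F r).erase z)).card = (F r).card := by
    rw [Finset.card_insert_of_notMem (fun h => hyr (Finset.mem_of_mem_erase h)),
      Finset.card_erase_of_mem hz]
    have : 1 ≤ (F r).card := Finset.card_pos.mpr ⟨z, hz⟩
    omega
  constructor
  · constructor
    · intro s t hst
      have hdisj : ∀ t', t' ≠ r → Disjoint (insert y ((F r).erase z)) (F t') := by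
        intro t' ht'
        rw [Finset.disjoint_insert_left]
        exact ⟨hy t', Finset.disjoint_of_subset_left (Finset.erase_subset _ _) (hF.1 r t' (fun h => ht' h.symm))⟩
      rcases eq_or_ne s r with rfl | hs
      · rw [Function.update_self, Function.update_of_ne (fun h => hst h.symm)]
        exact hdisj t (fun h => hst h.symm)
      · rw [Function.update_of_ne hs]
        rcases eq_or_ne t r with rfl | ht
        · rw [Function.update_self]
          exact (hdisj s hs).symm
        · rw [Function.update_of_ne ht]
          exact hF.1 s t hst
    · intro s
      rcases eq_or_ne s r with rfl | hs
      · rw [Function.update_self]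
        exact gIndep_exchange (hF.2 s) hyr hz hcz hrep
      · rw [Function.update_of_ne hs]
        exact hF.2 s
  · have := phi_update F r (insert y ((F r).erase z))
    omega

theorem rado_horn_partition (g : ι → K) (R : ℕ)
    (hcond : ∀ S : Finset ι, S.Nonempty → S.card ≤ R * finrank ℂ (span ℂ (g '' ↑S))) :
    ∃ A : Fin R → Finset ι, (∀ i, ∃ r, i ∈ A r) ∧
      (∀ r s, r ≠ s → Disjoint (A r) (A s)) ∧ ∀ r, GIndep g (A r) := by
  classical
  have hgoodempty : GoodFam g R (fun _ => ∅) :=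
    ⟨fun r s _ => by simp, fun r => by
      rw [gIndep_iff, Finset.card_empty, Finset.coe_empty, Set.image_empty, span_empty]
      exact (finrank_bot ℂ K).symm⟩
  obtain ⟨F0, hF0, hmax⟩ : ∃ F, GoodFam g R F ∧ ∀ F', GoodFam g R F' → PhiFam R F' ≤ PhiFam R F := by
    obtain ⟨F0, hmem, hmax⟩ := Finset.exists_max_image
      ((Finset.univ : Finset (Fin R → Finset ι)).filter (GoodFam g R)) (PhiFam R)
      ⟨fun _ => ∅, Finset.mem_filter.mpr ⟨Finset.mem_univ _, hgoodempty⟩⟩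
    exact ⟨F0, (Finset.mem_filter.mp hmem).2,
      fun F' h => hmax F' (Finset.mem_filter.mpr ⟨Finset.mem_univ _, h⟩)⟩
  by_cases hcov : ∀ i, ∃ r, i ∈ F0 r
  · exact ⟨F0, hcov, hF0.1, hF0.2⟩
  push_neg at hcov
  obtain ⟨e, he⟩ := hcov
  exfalso
  -- all reachable families are good and maximal
  have hreach_good : ∀ F, Relation.ReflTransGen (StepRel g R) F0 F →
      GoodFam g R F ∧ PhiFam R F = PhiFam R F0 := by
    intro F hF
    induction hF with
    | refl => exact ⟨hF0, rfl⟩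
    | tail hab hbc ih =>
      obtain ⟨hg, hphi⟩ := ih
      obtain ⟨hg', hphi'⟩ := stepRel_good hbc hg
      exact ⟨hg', by rw [hphi', hphi]⟩
  -- representation of uncovered elements
  have hrep_ex : ∀ F, Relation.ReflTransGen (StepRel g R) F0 F → ∀ y, (∀ s, y ∉ F s) →
      ∀ r, ∃ c : ι → ℂ, g y = ∑ w ∈ F r, c w • g w := by
    intro F hF y hy r
    have hmem : g y ∈ span ℂ (g '' ↑(F r)) := by
      by_contra hns
      obtain ⟨hg, hphi⟩ := hreach_good F hF
      have hGood' : GoodFam g R (Function.update F r (insert y (F r))) := by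
        constructor
        · intro s t hst
          have hdisj : ∀ t', t' ≠ r → Disjoint (insert y (F r)) (F t') := by
            intro t' ht'
            rw [Finset.disjoint_insert_left]
            exact ⟨hy t', hg.1 r t' (fun h => ht' h.symm)⟩
          rcases eq_or_ne s r with rfl | hs
          · rw [Function.update_self, Function.update_of_ne (fun h => hst h.symm)]
            exact hdisj t (fun h => hst h.symm)
          · rw [Function.update_of_ne hs]
            rcases eq_or_ne t r with rfl | ht
            · rw [Function.update_self]
              exact (hdisj s hs).symm
            · rw [Function.update_of_ne ht]
              exact hg.1 s t hst
        · intro s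
          rcases eq_or_ne s r with rfl | hs
          · rw [Function.update_self]
            exact gIndep_insert (hg.2 s) (hy s) hns
          · rw [Function.update_of_ne hs]
            exact hg.2 s
      have hle := hmax _ hGood'
      have hphi2 := phi_update F r (insert y (F r))
      have hcard : (insert y (F r)).card = (F r).card + 1 :=
        Finset.card_insert_of_notMem (hy r)
      omega
    exact (mem_span_image_finset_iff g (F r) (g y)).mp hmem
  -- the reachable-uncovered set Z
  set Z : Finset ι := Finset.univ.filter
    (fun i => ∃ F, Relation.ReflTransGen (StepRel g R) F0 F ∧ ∀ s, i ∉ F s) with hZ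
  have hmemZ : ∀ i, i ∈ Z ↔
      ∃ F, Relation.ReflTransGen (StepRel g R) F0 F ∧ ∀ s, i ∉ F s := by
    intro i; simp [hZ]
  have heZ : e ∈ Z := (hmemZ e).mpr ⟨F0, Relation.ReflTransGen.refl, he⟩
  -- support of representations lies in Z
  have hsupp : ∀ F, Relation.ReflTransGen (StepRel g R) F0 F → ∀ y (r : Fin R) (c : ι → ℂ),
      (∀ s, y ∉ F s) → (g y = ∑ w ∈ F r, c w • g w) → ∀ w ∈ F r, c w ≠ 0 → w ∈ Z := by
    intro F hF y r c hy hrep w hw hcw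
    have hgood := (hreach_good F hF).1
    have hstep : StepRel g R F (Function.update F r (insert y ((F r).erase w))) :=
      ⟨y, r, w, c, hy, hw, hcw, hrep, rfl⟩
    refine (hmemZ w).mpr ⟨_, Relation.ReflTransGen.tail hF hstep, ?_⟩
    intro s
    rcases eq_or_ne s r with rfl | hs
    · rw [Function.update_self]
      intro hmem
      rcases Finset.mem_insert.mp hmem with rfl | hmem
      · exact hy s hw
      · exact (Finset.notMem_erase w _) hmem
    · rw [Function.update_of_ne hs]
      intro hmem
      exact (Finset.disjoint_left.mp (hgood.1 s r hs) hmem) hw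
  -- representation supported in Z
  have hrep_Z : ∀ F, Relation.ReflTransGen (StepRel g R) F0 F → ∀ y (r : Fin R) (c : ι → ℂ),
      (∀ s, y ∉ F s) → (g y = ∑ w ∈ F r, c w • g w) →
      g y = ∑ w ∈ F r ∩ Z, c w • g w := by
    intro F hF y r c hy hrep
    rw [hrep]
    refine (Finset.sum_subset Finset.inter_subset_left ?_).symm
    intro w hw hw2
    have hc0 : c w = 0 := by
      by_contra h
      exact hw2 (Finset.mem_inter.mpr ⟨hw, hsupp F hF y r c hy hrep w hw h⟩)
    rw [hc0, zero_smul]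
  -- invariance of spans of parts intersected with Z
  have hinv : ∀ F, Relation.ReflTransGen (StepRel g R) F0 F →
      ∀ r, span ℂ (g '' ↑(F r ∩ Z)) = span ℂ (g '' ↑(F0 r ∩ Z)) := by
    intro F hF
    induction hF with
    | refl => intro r; rfl
    | @tail F1 F2 hab hbc ih =>
      intro r
      obtain ⟨y, r', z, c, hy, hz, hcz, hrep, rfl⟩ := hbc
      rcases eq_or_ne r r' with rfl | hr
      · rw [Function.update_self, ← ih r]
        have hyZ : y ∈ Z := (hmemZ y).mpr ⟨F1, hab, hy⟩
        have hzZ : z ∈ Z := hsupp F1 hab y r c hy hrep z hz hcz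
        have hrepZ : g y = ∑ w ∈ F1 r ∩ Z, c w • g w := hrep_Z F1 hab y r c hy hrep
        have hsets : (insert y ((F1 r).erase z)) ∩ Z = insert y ((F1 r ∩ Z).erase z) := by
          ext w
          simp only [Finset.mem_inter, Finset.mem_insert, Finset.mem_erase]
          constructor
          · rintro ⟨(rfl | ⟨hwz, hw⟩), hwZ⟩
            · exact Or.inl rfl
            · exact Or.inr ⟨hwz, hw, hwZ⟩
          · rintro (rfl | ⟨hwz, hw, hwZ⟩)
            · exact ⟨Or.inl rfl, hyZ⟩
            · exact ⟨Or.inr ⟨hwz, hw⟩, hwZ⟩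
        rw [hsets]
        exact span_exchange (Finset.mem_inter.mpr ⟨hz, hzZ⟩) hcz hrepZ
      · rw [Function.update_of_ne hr]
        exact ih r
  -- every element of Z is in the span of each part's Z-trace
  have hyV : ∀ y ∈ Z, ∀ r, g y ∈ span ℂ (g '' ↑(F0 r ∩ Z)) := by
    intro y hyZ r
    obtain ⟨F, hF, hy⟩ := (hmemZ y).mp hyZ
    obtain ⟨c, hc⟩ := hrep_ex F hF y hy r
    rw [← hinv F hF r, hrep_Z F hF y r c hy hc]
    exact sum_mem fun w hw => smul_mem _ _ (subset_span ⟨w, by simpa using hw, rfl⟩)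
  have hspanZr : ∀ r, span ℂ (g '' ↑Z) = span ℂ (g '' ↑(F0 r ∩ Z)) := by
    intro r
    apply le_antisymm
    · rw [span_le]
      rintro - ⟨w, hw, rfl⟩
      exact hyV w (by simpa using hw) r
    · exact span_mono (Set.image_mono (by simp [Finset.inter_subset_right]))
  have hcardr : ∀ r, (F0 r ∩ Z).card = finrank ℂ (span ℂ (g '' ↑Z)) := by
    intro r
    rw [hspanZr r]
    exact (gIndep_iff g _).mp (gIndep_mono (hF0.2 r) Finset.inter_subset_left)
  -- counting
  have hUsub : Finset.univ.biUnion (fun r => F0 r ∩ Z) ⊆ Z.erase e := by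
    intro w hw
    obtain ⟨r, -, hw⟩ := Finset.mem_biUnion.mp hw
    obtain ⟨hw1, hw2⟩ := Finset.mem_inter.mp hw
    exact Finset.mem_erase.mpr ⟨fun h => (he r) (h ▸ hw1), hw2⟩
  have hcardU : (Finset.univ.biUnion fun r => F0 r ∩ Z).card = ∑ r, (F0 r ∩ Z).card := by
    apply Finset.card_biUnion
    intro r _ s _ hrs
    exact Finset.disjoint_of_subset_left Finset.inter_subset_left
      (Finset.disjoint_of_subset_right Finset.inter_subset_left (hF0.1 r s hrs))
  have hsum : ∑ r : Fin R, (F0 r ∩ Z).card = R * finrank ℂ (span ℂ (g '' ↑Z)) := by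
    rw [Finset.sum_congr rfl (fun r _ => hcardr r)]
    simp [Finset.sum_const, mul_comm]
  have h1 : R * finrank ℂ (span ℂ (g '' ↑Z)) ≤ (Z.erase e).card := by
    rw [← hsum, ← hcardU]
    exact Finset.card_le_card hUsub
  have h2 : Z.card ≤ R * finrank ℂ (span ℂ (g '' ↑Z)) := hcond Z ⟨e, heZ⟩
  have h3 : (Z.erase e).card = Z.card - 1 := Finset.card_erase_of_mem heZ
  have h4 : 1 ≤ Z.card := Finset.card_pos.mpr ⟨e, heZ⟩
  omega

end RH2

open scoped InnerProductSpace

/-- If `{f j : j ∈ J}` is a Parseval frame for a finite-dimensional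
Hilbert space with `‖f j‖² ≤ 1 - δ` for all `j`, and `R ≥ 1/δ` is a natural number,
then `J` can be partitioned into `R` sets each of whose complements spans. -/
theorem parseval_partition_cospanning
    {H : Type*} [NormedAddCommGroup H] [InnerProductSpace ℂ H] [FiniteDimensional ℂ H]
    {J : Type*} [Fintype J] (δ : ℝ) (hδ : 0 < δ) (f : J → H)
    (hParseval : ∀ x : H, ∑ j : J, ‖⟪x, f j⟫_ℂ‖ ^ 2 = ‖x‖ ^ 2)
    (hnorm : ∀ j : J, ‖f j‖ ^ 2 ≤ 1 - δ)
    (R : ℕ) (hR : 1 / δ ≤ (R : ℝ)) :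
    ∃ A : Fin R → Set J,
      (⋃ r, A r) = Set.univ ∧ Pairwise (Function.onFun Disjoint A) ∧
      ∀ r, Submodule.span ℂ (f '' (A r)ᶜ) = ⊤ := by
  classical
  have hδR : 1 ≤ δ * R := by
    rw [div_le_iff₀ hδ] at hR
    linarith
  -- the analysis operator
  let T0 : H →ₗ[ℂ] EuclideanSpace ℂ J :=
    { toFun := fun x => (WithLp.toLp 2 (fun j => ⟪f j, x⟫_ℂ) : EuclideanSpace ℂ J)
      map_add' := by intro x y; ext j; simp [inner_add_right]
      map_smul' := by intro a x; ext j; simp [inner_smul_right] }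
  have hT0app : ∀ x j, T0 x j = ⟪f j, x⟫_ℂ := fun x j => rfl
  have hT0norm : ∀ x, ‖T0 x‖ = ‖x‖ := by
    intro x
    rw [EuclideanSpace.norm_eq]
    have h1 : ∀ j, ‖T0 x j‖ ^ 2 = ‖⟪x, f j⟫_ℂ‖ ^ 2 := by
      intro j
      rw [hT0app, norm_inner_symm]
    rw [Finset.sum_congr rfl (fun j _ => h1 j), hParseval x]
    exact Real.sqrt_sq (norm_nonneg x)
  let T : H →ₗᵢ[ℂ] EuclideanSpace ℂ J := ⟨T0, hT0norm⟩
  set W : Submodule ℂ (EuclideanSpace ℂ J) := LinearMap.range T0 with hWdef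
  let P := orthogonalProjection Wᗮ
  set g : J → EuclideanSpace ℂ J :=
    fun j => (P (EuclideanSpace.single j 1) : EuclideanSpace ℂ J) with hgdef
  have hgW : ∀ j, g j ∈ Wᗮ := fun j => (P (EuclideanSpace.single j 1)).2
  -- (A) inner products with g for vectors in Wᗮ
  have hinner : ∀ u ∈ Wᗮ, ∀ j, ⟪u, g j⟫_ℂ = (starRingEnd ℂ) (u j) := by
    intro u hu j
    have hsub : EuclideanSpace.single j (1:ℂ) - g j ∈ (Wᗮ)ᗮ :=
      Submodule.sub_starProjection_mem_orthogonal (K := Wᗮ) (EuclideanSpace.single j 1)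
    have h0 : ⟪u, EuclideanSpace.single j (1:ℂ) - g j⟫_ℂ = 0 :=
      inner_right_of_mem_orthogonal hu hsub
    have : ⟪u, g j⟫_ℂ = ⟪u, EuclideanSpace.single j (1:ℂ)⟫_ℂ := by
      rw [inner_sub_right] at h0
      linear_combination -h0
    rw [this, EuclideanSpace.inner_single_right]
    simp
  -- (B) Parseval identity on Wᗮ
  have hgParseval : ∀ u ∈ Wᗮ, ∑ j : J, ‖⟪u, g j⟫_ℂ‖ ^ 2 = ‖u‖ ^ 2 := by
    intro u hu
    have h1 : ∀ j, ‖⟪u, g j⟫_ℂ‖ ^ 2 = ‖u j‖ ^ 2 := by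
      intro j
      rw [hinner u hu j, RCLike.norm_conj]
    rw [Finset.sum_congr rfl (fun j _ => h1 j)]
    rw [EuclideanSpace.norm_eq, Real.sq_sqrt]
    exact Finset.sum_nonneg fun j _ => sq_nonneg _
  -- (C) the norm of g j
  have hgnorm : ∀ j, ‖g j‖ ^ 2 = 1 - ‖f j‖ ^ 2 := by
    intro j
    have hq : EuclideanSpace.single j (1:ℂ) - T0 (f j) ∈ Wᗮ := by
      rw [Submodule.mem_orthogonal]
      rintro w ⟨x, rfl⟩
      rw [inner_sub_right]
      have h1 : ⟪T0 x, EuclideanSpace.single j (1:ℂ)⟫_ℂ = (starRingEnd ℂ) (T0 x j) := by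
        rw [EuclideanSpace.inner_single_right]; simp
      have h2 : ⟪T0 x, T0 (f j)⟫_ℂ = ⟪x, f j⟫_ℂ := T.inner_map_map x (f j)
      rw [h1, h2, hT0app, inner_conj_symm]
      ring
    -- g j = single j 1 - T0 (f j)
    have hgj : g j = EuclideanSpace.single j (1:ℂ) - T0 (f j) := by
      have hd1 : g j - (EuclideanSpace.single j (1:ℂ) - T0 (f j)) ∈ Wᗮ :=
        Submodule.sub_mem _ (hgW j) hq
      have hd2 : g j - (EuclideanSpace.single j (1:ℂ) - T0 (f j)) ∈ (Wᗮ)ᗮ := by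
        have e1 : g j - (EuclideanSpace.single j (1:ℂ) - T0 (f j))
            = T0 (f j) - (EuclideanSpace.single j (1:ℂ) - g j) := by abel
        rw [e1]
        refine Submodule.sub_mem _ ?_ ?_
        · exact Submodule.le_orthogonal_orthogonal W (LinearMap.mem_range_self T0 (f j))
        · exact Submodule.sub_starProjection_mem_orthogonal (K := Wᗮ) (EuclideanSpace.single j 1)
      have := (Submodule.orthogonal_disjoint Wᗮ).le_bot ⟨hd1, hd2⟩
      rw [Submodule.mem_bot] at this
      exact sub_eq_zero.mp this
    have hsingle : EuclideanSpace.single j (1:ℂ) = T0 (f j) + g j := by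
      rw [hgj]; abel
    have horth : ⟪T0 (f j), g j⟫_ℂ = 0 :=
      inner_right_of_mem_orthogonal (LinearMap.mem_range_self T0 (f j)) (hgW j)
    have hnorms : ‖EuclideanSpace.single j (1:ℂ)‖ ^ 2 = ‖T0 (f j)‖ ^ 2 + ‖g j‖ ^ 2 := by
      rw [hsingle, @norm_add_sq ℂ, horth]
      simp
    rw [EuclideanSpace.norm_single, norm_one, hT0norm] at hnorms
    linarith [hnorms]
  -- (E) the rank condition
  have hcond : ∀ S : Finset J, S.Nonempty →
      S.card ≤ R * Module.finrank ℂ (Submodule.span ℂ (g '' ↑S)) := by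
    intro S hS
    set V := Submodule.span ℂ (g '' ↑S) with hVdef
    have hVW : V ≤ Wᗮ := by
      rw [hVdef, Submodule.span_le]
      rintro - ⟨j, -, rfl⟩
      exact hgW j
    set b := stdOrthonormalBasis ℂ ↥V with hbdef
    have hnormb : ∀ i, ‖((b i : ↥V) : EuclideanSpace ℂ J)‖ = 1 := fun i => b.orthonormal.1 i
    -- each g j for j ∈ S has squared norm = sum over basis coefficients
    have hsq : ∀ j ∈ S, ‖g j‖ ^ 2
        = ∑ i, ‖⟪((b i : ↥V) : EuclideanSpace ℂ J), g j⟫_ℂ‖ ^ 2 := by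
      intro j hj
      have hmem : g j ∈ V := Submodule.subset_span ⟨j, by simpa using hj, rfl⟩
      set v : ↥V := ⟨g j, hmem⟩ with hvdef
      have h1 : ‖g j‖ = ‖v‖ := rfl
      have h2 : ‖v‖ = ‖b.repr v‖ := (b.repr.norm_map v).symm
      have h3 : ‖b.repr v‖ ^ 2 = ∑ i, ‖b.repr v i‖ ^ 2 := by
        rw [EuclideanSpace.norm_eq, Real.sq_sqrt]
        exact Finset.sum_nonneg fun i _ => sq_nonneg _
      rw [h1, h2, h3]
      refine Finset.sum_congr rfl fun i _ => ?_
      rw [b.repr_apply_apply]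
      rfl
    have hmain : (S.card : ℝ) * δ ≤ (Module.finrank ℂ ↥V : ℝ) := by
      have hlow : (S.card : ℝ) * δ ≤ ∑ j ∈ S, ‖g j‖ ^ 2 := by
        rw [mul_comm]
        calc δ * S.card = ∑ _j ∈ S, δ := by rw [Finset.sum_const, nsmul_eq_mul, mul_comm]
        _ ≤ ∑ j ∈ S, ‖g j‖ ^ 2 := Finset.sum_le_sum fun j _ => by
              rw [hgnorm j]; linarith [hnorm j]
      have hswap : ∑ j ∈ S, ‖g j‖ ^ 2
          = ∑ i, ∑ j ∈ S, ‖⟪((b i : ↥V) : EuclideanSpace ℂ J), g j⟫_ℂ‖ ^ 2 := by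
        rw [Finset.sum_congr rfl hsq, Finset.sum_comm]
      have hup : ∀ i, ∑ j ∈ S, ‖⟪((b i : ↥V) : EuclideanSpace ℂ J), g j⟫_ℂ‖ ^ 2 ≤ 1 := by
        intro i
        calc ∑ j ∈ S, ‖⟪((b i : ↥V) : EuclideanSpace ℂ J), g j⟫_ℂ‖ ^ 2
            ≤ ∑ j : J, ‖⟪((b i : ↥V) : EuclideanSpace ℂ J), g j⟫_ℂ‖ ^ 2 :=
              Finset.sum_le_sum_of_subset_of_nonneg (Finset.subset_univ S)
                (fun j _ _ => sq_nonneg _)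
          _ = ‖((b i : ↥V) : EuclideanSpace ℂ J)‖ ^ 2 :=
              hgParseval _ (hVW (b i).2)
          _ = 1 := by rw [hnormb i, one_pow]
      calc (S.card : ℝ) * δ ≤ ∑ j ∈ S, ‖g j‖ ^ 2 := hlow
        _ = ∑ i, ∑ j ∈ S, ‖⟪((b i : ↥V) : EuclideanSpace ℂ J), g j⟫_ℂ‖ ^ 2 := hswap
        _ ≤ ∑ _i : Fin (Module.finrank ℂ ↥V), (1:ℝ) := Finset.sum_le_sum fun i _ => hup i
        _ = (Module.finrank ℂ ↥V : ℝ) := by simp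
    have : (S.card : ℝ) ≤ (R : ℝ) * (Module.finrank ℂ ↥V : ℝ) := by
      calc (S.card : ℝ) = (S.card : ℝ) * 1 := by ring
        _ ≤ (S.card : ℝ) * (δ * R) := by
            apply mul_le_mul_of_nonneg_left hδR (Nat.cast_nonneg _)
        _ = ((S.card : ℝ) * δ) * R := by ring
        _ ≤ (Module.finrank ℂ ↥V : ℝ) * R := by
            apply mul_le_mul_of_nonneg_right hmain (Nat.cast_nonneg _)
        _ = (R : ℝ) * (Module.finrank ℂ ↥V : ℝ) := by ring
    exact_mod_cast this
  -- apply the combinatorial partition theorem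
  obtain ⟨A, hcov, hdisj, hli⟩ := rado_horn_partition g R hcond
  refine ⟨fun r => (↑(A r) : Set J), ?_, ?_, ?_⟩
  · ext i
    simp only [Set.mem_iUnion, Finset.mem_coe, Set.mem_univ, iff_true]
    exact hcov i
  · intro r s hrs
    exact Finset.disjoint_coe.mpr (hdisj r s hrs)
  · intro r
    by_contra hne
    set U := Submodule.span ℂ (f '' (↑(A r) : Set J)ᶜ) with hUdef
    have hUbot : Uᗮ ≠ ⊥ := fun h => hne (Submodule.orthogonal_eq_bot_iff.mp h)
    obtain ⟨x, hxU, hx0⟩ := Submodule.exists_mem_ne_zero_of_ne_bot hUbot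
    have hc0 : ∀ j, j ∉ A r → T0 x j = 0 := by
      intro j hj
      have hfj : f j ∈ U := Submodule.subset_span ⟨j, by simpa using hj, rfl⟩
      rw [hT0app]
      exact (Submodule.mem_orthogonal U x).mp hxU _ hfj
    have hsum0 : ∑ w ∈ A r, T0 x w • g w = 0 := by
      have h1 : ∑ w ∈ A r, T0 x w • g w = ∑ w : J, T0 x w • g w := by
        refine Finset.sum_subset (Finset.subset_univ _) ?_
        intro w _ hw
        rw [hc0 w hw, zero_smul]
      have h3 : ∑ w : J, T0 x w • EuclideanSpace.single w (1:ℂ) = T0 x := by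
        have hb := (EuclideanSpace.basisFun J ℂ).sum_repr (T0 x)
        simpa [EuclideanSpace.basisFun_repr, EuclideanSpace.basisFun_apply] using hb
      have h2 : ∑ w : J, T0 x w • g w = (P (T0 x) : EuclideanSpace ℂ J) := by
        conv_rhs => rw [← h3]
        rw [map_sum, Submodule.coe_sum]
        refine Finset.sum_congr rfl fun w _ => ?_
        rw [map_smul]
        rfl
      have h4 : P (T0 x) = 0 :=
        Submodule.orthogonalProjectionOnto_apply_of_mem_orthogonal
          (Submodule.le_orthogonal_orthogonal W (LinearMap.mem_range_self T0 x))
      rw [h1, h2, h4, Submodule.coe_zero]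
    have hzero : ∀ w ∈ A r, T0 x w = 0 := by
      have hli' := hli r
      rw [GIndep] at hli'
      have := Fintype.linearIndependent_iff.mp hli' (fun w => T0 x ↑w) ?_
      · intro w hw
        exact this ⟨w, by simpa using hw⟩
      · rw [sum_set_coe_finset (A r) (fun w => T0 x w • g w)]
        exact hsum0
    have hTx0 : T0 x = 0 := by
      ext w
      by_cases hw : w ∈ A r
      · exact hzero w hw
      · exact hc0 w hw
    have : ‖x‖ = 0 := by rw [← hT0norm, hTx0, norm_zero]
    exact hx0 (norm_eq_zero.mp this)
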